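/- arXiv:2403.09231 — 6 statements merged into one kernel-verified Lean document; each statement's English description precedes it below -/
import Mathlib

section
/- In any quasigroup A, (u·v)^{-1} = v^{-1}·u^{-1} for all u, v ∈ A. -/
/-- A quasigroup (IP loop): unital product with two-sided inverse property. -/
structure Quasigroup (A : Type*) where
  mul : A → A → A
  e : A
  inv : A → A
  e_mul : ∀ u, mul e u = u
  mul_e : ∀ u, mul u e = u
  inv_mul_cancel : ∀ u v, mul (inv u) (mul u v) = v
  mul_inv_cancel : ∀ u v, mul (mul v u) (inv u) = v

/-- In any quasigroup, `(u·v)⁻¹ = v⁻¹·u⁻¹`. -/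
theorem quasigroup_inv_mul {A : Type*} (Q : Quasigroup A) (u v : A) :
    Q.inv (Q.mul u v) = Q.mul (Q.inv v) (Q.inv u) := by
  have h1 : Q.mul v (Q.inv (Q.mul u v)) = Q.inv u := by
    have h := Q.mul_inv_cancel (Q.mul u v) (Q.inv u)
    rwa [Q.inv_mul_cancel] at h
  calc Q.inv (Q.mul u v)
      = Q.mul (Q.inv v) (Q.mul v (Q.inv (Q.mul u v))) := (Q.inv_mul_cancel _ _).symm
    _ = Q.mul (Q.inv v) (Q.inv u) := by rw [h1]
end

section
/- In a quasigroupoid A, λ(a•b) = λ(b)•λ(a) for all composable arrows a, b (with s(a) = t(b)). -/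
/-- A quasigroupoid: objects `O`, arrows `A`, with a partial product `mul`
(meaningful on composable pairs, i.e. when `s a = t b`) and inverse map `inv`.
All axioms involving the product are guarded by composability hypotheses. -/
structure Quasigroupoid (O : Type*) (A : Type*) where
  s : A → O
  t : A → O
  e : O → A
  inv : A → A
  mul : A → A → A
  s_e : ∀ x, s (e x) = x
  t_e : ∀ x, t (e x) = x
  e_mul : ∀ a, mul (e (t a)) a = a
  mul_e : ∀ a, mul a (e (s a)) = a
  s_mul : ∀ a b, s a = t b → s (mul a b) = s b
  t_mul : ∀ a b, s a = t b → t (mul a b) = t a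
  inv_comp_left : ∀ a b, s a = t b → s (inv a) = t (mul a b)
  inv_mul_cancel : ∀ a b, s a = t b → mul (inv a) (mul a b) = b
  comp_inv_right : ∀ a b, s a = t b → s (mul a b) = t (inv b)
  mul_inv_cancel : ∀ a b, s a = t b → mul (mul a b) (inv b) = a

lemma Quasigroupoid.s_inv {O A1 : Type*} (Q : Quasigroupoid O A1) (x : A1) :
    Q.s (Q.inv x) = Q.t x := by
  have h : Q.s x = Q.t (Q.e (Q.s x)) := (Q.t_e _).symm
  have := Q.inv_comp_left x (Q.e (Q.s x)) h
  rwa [Q.mul_e x] at this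

lemma Quasigroupoid.t_inv {O A1 : Type*} (Q : Quasigroupoid O A1) (x : A1) :
    Q.t (Q.inv x) = Q.s x := by
  have h : Q.s (Q.e (Q.t x)) = Q.t x := Q.s_e _
  have := Q.comp_inv_right (Q.e (Q.t x)) x h
  rw [Q.e_mul x] at this
  exact this.symm

lemma Quasigroupoid.inv_mul_self {O A1 : Type*} (Q : Quasigroupoid O A1) (x : A1) :
    Q.mul (Q.inv x) x = Q.e (Q.s x) := by
  have h : Q.s x = Q.t (Q.e (Q.s x)) := (Q.t_e _).symm
  have := Q.inv_mul_cancel x (Q.e (Q.s x)) h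
  rwa [Q.mul_e x] at this

lemma Quasigroupoid.inv_inv {O A1 : Type*} (Q : Quasigroupoid O A1) (x : A1) :
    Q.inv (Q.inv x) = x := by
  have h : Q.s (Q.inv x) = Q.t x := Q.s_inv x
  have h1 := Q.inv_mul_cancel (Q.inv x) x h
  rw [Q.inv_mul_self x] at h1
  have h2 : Q.s (Q.inv (Q.inv x)) = Q.s x := by
    rw [Q.s_inv, Q.t_inv]
  calc Q.inv (Q.inv x) = Q.mul (Q.inv (Q.inv x)) (Q.e (Q.s (Q.inv (Q.inv x)))) :=
        (Q.mul_e _).symm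
    _ = Q.mul (Q.inv (Q.inv x)) (Q.e (Q.s x)) := by rw [h2]
    _ = x := h1

/-- In a quasigroupoid, `λ(a•b) = λ(b)•λ(a)` for composable `a`, `b`. -/
theorem quasigroupoid_inv_mul {O A1 : Type*} (Q : Quasigroupoid O A1) (a b : A1)
    (h : Q.s a = Q.t b) :
    Q.inv (Q.mul a b) = Q.mul (Q.inv b) (Q.inv a) := by
  set u := Q.mul a b with hu
  -- mul u (inv b) = a
  have h1 : Q.mul u (Q.inv b) = a := Q.mul_inv_cancel a b h
  -- mul (inv u) a = inv b
  have hcomp : Q.s u = Q.t (Q.inv b) := by rw [Q.s_mul a b h, Q.t_inv]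
  have h2 : Q.mul (Q.inv u) a = Q.inv b := by
    have := Q.inv_mul_cancel u (Q.inv b) hcomp
    rwa [h1] at this
  -- mul (mul (inv b) (inv a)) a = inv b
  have hcomp2 : Q.s (Q.inv b) = Q.t (Q.inv a) := by rw [Q.s_inv, Q.t_inv, h]
  have h3 : Q.mul (Q.mul (Q.inv b) (Q.inv a)) a = Q.inv b := by
    have := Q.mul_inv_cancel (Q.inv b) (Q.inv a) hcomp2
    rwa [Q.inv_inv a] at this
  -- cancel a on the right: inv u = mul (mul (inv u) a) (inv a)
  have hcomp3 : Q.s (Q.inv u) = Q.t a := by rw [Q.s_inv, Q.t_mul a b h]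
  have h4 := Q.mul_inv_cancel (Q.inv u) a hcomp3
  rw [h2] at h4
  -- now h4 : mul (inv b) (inv a) = inv u
  exact h4.symm
end

section
/- Given a quasigroup A acting on a set X via ψ : A × X → X with ψ(e_A, x) = x and ψ(a·b, x) = ψ(a, ψ(b, x)), the structure B with B₀ = X, B₁ = A × X, s(a,x) = x, t(a,x) = ψ(a,x), id(x) = (e_A, x), product (a,x)⋆(b,y) = (a·b, y) defined when ψ(b,y) = x, and inverse λ(a,x) = (a^{-1}, ψ(a,x)), is a quasigroupoid. -/
/-- The structure associated to an action `ψ` of a quasigroup on a set `X`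
(objects `X`, arrows `A × X`, source `(a,x) ↦ x`, target `(a,x) ↦ ψ a x`,
identities `x ↦ (e,x)`, product `(a,x)⋆(b,y) = (a·b, y)` on composable pairs,
inverse `(a,x) ↦ (a⁻¹, ψ a x)`) is a quasigroupoid. -/
theorem action_quasigroupoid {A X : Type*} (Q : Quasigroup A) (ψ : A → X → X)
    (h1 : ∀ x, ψ Q.e x = x) (h2 : ∀ a b x, ψ (Q.mul a b) x = ψ a (ψ b x)) :
    ∃ B : Quasigroupoid X (A × X),
      (∀ p, B.s p = p.2) ∧
      (∀ p, B.t p = ψ p.1 p.2) ∧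
      (∀ x, B.e x = (Q.e, x)) ∧
      (∀ p, B.inv p = (Q.inv p.1, ψ p.1 p.2)) ∧
      (∀ p q : A × X, ψ q.1 q.2 = p.2 → B.mul p q = (Q.mul p.1 q.1, q.2)) := by
  have inv_mul : ∀ u, Q.mul (Q.inv u) u = Q.e := fun u => by
    have := Q.inv_mul_cancel u Q.e; rwa [Q.mul_e] at this
  have mul_inv : ∀ u, Q.mul u (Q.inv u) = Q.e := fun u => by
    have := Q.mul_inv_cancel u Q.e; rwa [Q.e_mul] at this
  refine ⟨{
    s := fun p => p.2
    t := fun p => ψ p.1 p.2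
    e := fun x => (Q.e, x)
    inv := fun p => (Q.inv p.1, ψ p.1 p.2)
    mul := fun p q => (Q.mul p.1 q.1, q.2)
    s_e := fun x => rfl
    t_e := fun x => h1 x
    e_mul := fun a => by simp [Q.e_mul]
    mul_e := fun a => by simp [Q.mul_e]
    s_mul := fun a b _ => rfl
    t_mul := fun a b h => by simp only [h2, h]
    inv_comp_left := fun a b h => by simp only [h2, h]
    inv_mul_cancel := fun a b h => by simp [Q.inv_mul_cancel]
    comp_inv_right := fun a b h => by
      show b.2 = ψ (Q.inv b.1) (ψ b.1 b.2)
      rw [← h2, inv_mul, h1]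
    mul_inv_cancel := fun a b h => by
      show (Q.mul (Q.mul a.1 b.1) (Q.inv b.1), ψ b.1 b.2) = a
      simp only [Q.mul_inv_cancel, ← h]
  }, fun p => rfl, fun p => rfl, fun x => rfl, fun p => rfl, fun p q _ => rfl⟩
end

section
/- Let (A, H) be a matched pair of quasigroupoids. Then λ_A(φ_A(h,a)) = φ_A(φ_H(h,a), λ_A(a)) for all (h,a) with s_H(h) = t_A(a). -/
/-- A matched pair of quasigroupoids with common base `O`:
a left action `φA` of `H` on `A` and a right action `φH` of `A` on `H`
satisfying the module conditions and the matched pair compatibilities. -/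
structure IsMatchedPair {O A1 H1 : Type*} (A : Quasigroupoid O A1) (H : Quasigroupoid O H1)
    (φA : H1 → A1 → A1) (φH : H1 → A1 → H1) : Prop where
  t_act : ∀ h a, H.s h = A.t a → A.t (φA h a) = H.t h
  act_mul : ∀ g h a, H.s g = H.t h → H.s h = A.t a → φA (H.mul g h) a = φA g (φA h a)
  act_id : ∀ a, φA (H.e (A.t a)) a = a
  s_act : ∀ h a, H.s h = A.t a → H.s (φH h a) = A.s a
  actH_mul : ∀ h a b, H.s h = A.t a → A.s a = A.t b → φH h (A.mul a b) = φH (φH h a) b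
  actH_id : ∀ h, φH h (A.e (H.s h)) = h
  compat_st : ∀ h a, H.s h = A.t a → A.s (φA h a) = H.t (φH h a)
  compat_mulA : ∀ h a b, H.s h = A.t a → A.s a = A.t b →
    φA h (A.mul a b) = A.mul (φA h a) (φA (φH h a) b)
  compat_mulH : ∀ g h a, H.s g = H.t h → H.s h = A.t a →
    φH (H.mul g h) a = H.mul (φH g (φA h a)) (φH h a)


section Aux
variable {O A1 : Type*} (A : Quasigroupoid O A1)

lemma Quasigroupoid.t_inv_s9 (a : A1) : A.t (A.inv a) = A.s a := by
  have h := A.comp_inv_right (A.e (A.t a)) a (by rw [A.s_e])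
  rw [A.e_mul] at h
  exact h.symm

lemma Quasigroupoid.s_inv_s9 (a : A1) : A.s (A.inv a) = A.t a := by
  have h := A.inv_comp_left a (A.e (A.s a)) (by rw [A.t_e])
  rw [A.mul_e] at h
  exact h

lemma Quasigroupoid.mul_inv_self (a : A1) : A.mul a (A.inv a) = A.e (A.t a) := by
  have h := A.mul_inv_cancel (A.e (A.t a)) a (by rw [A.s_e])
  rw [A.e_mul] at h
  exact h

lemma Quasigroupoid.inv_unique (x y : A1) (hxy : A.s x = A.t y)
    (hmul : A.mul x y = A.e (A.t x)) : y = A.inv x := by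
  have h := A.inv_mul_cancel x y hxy
  rw [hmul, show A.t x = A.s (A.inv x) from (A.s_inv_s9 x).symm, A.mul_e] at h
  exact h.symm

end Aux

/-- For a matched pair of quasigroupoids: `λ_A(φA(h,a)) = φA(φH(h,a), λ_A a)`. -/
theorem matchedPair_inv_act {O A1 H1 : Type*}
    (A : Quasigroupoid O A1) (H : Quasigroupoid O H1)
    (φA : H1 → A1 → A1) (φH : H1 → A1 → H1)
    (hmp : IsMatchedPair A H φA φH) (h : H1) (a : A1) (hc : H.s h = A.t a) :
    A.inv (φA h a) = φA (φH h a) (A.inv a) := by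
  -- step 1: φA h (e (s h)) = e (t h)
  have he : A.e (H.s h) = A.e (A.t a) := by rw [hc]
  have eq1 := hmp.compat_mulA h (A.e (H.s h)) a (by rw [A.t_e]) (by rw [A.s_e]; exact hc)
  rw [hmp.actH_id, he, A.e_mul] at eq1
  -- eq1 : φA h a = A.mul (φA h (A.e (A.t a))) (φA h a)
  have hta : A.t (φA h a) = H.t h := hmp.t_act h a hc
  have hsx : A.s (φA h (A.e (A.t a))) = H.t h := by
    have := hmp.compat_st h (A.e (H.s h)) (by rw [A.t_e])
    rw [hmp.actH_id, he] at this
    exact this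
  have eq2 := A.mul_inv_cancel (φA h (A.e (A.t a))) (φA h a) (by rw [hsx, hta])
  rw [← eq1, A.mul_inv_self, hta] at eq2
  -- eq2 : A.e (H.t h) = φA h (A.e (A.t a))
  -- step 2: main computation
  have hinv : A.s a = A.t (A.inv a) := (A.t_inv_s9 a).symm
  have eq3 := hmp.compat_mulA h a (A.inv a) hc hinv
  rw [A.mul_inv_self, ← he, he, ← eq2] at eq3
  -- eq3 : A.e (H.t h) = A.mul (φA h a) (φA (φH h a) (A.inv a))
  have hty : A.t (φA (φH h a) (A.inv a)) = H.t (φH h a) :=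
    hmp.t_act (φH h a) (A.inv a) (by rw [hmp.s_act h a hc, A.t_inv_s9])
  have hcomp : A.s (φA h a) = A.t (φA (φH h a) (A.inv a)) := by
    rw [hty, hmp.compat_st h a hc]
  exact (A.inv_unique (φA h a) (φA (φH h a) (A.inv a)) hcomp (by rw [← eq3, hta])).symm
end

section
/- Let (A, H) be a matched pair of quasigroupoids. Then λ_H(φ_H(h,a)) = φ_H(λ_H(h), φ_A(h,a)) for all (h,a) with s_H(h) = t_A(a). -/
namespace Quasigroupoid

variable {O T : Type*} (Q : Quasigroupoid O T)

lemma mul_inv (x : T) : Q.mul x (Q.inv x) = Q.e (Q.t x) := by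
  have hs : Q.s (Q.e (Q.t x)) = Q.t x := Q.s_e _
  have := Q.mul_inv_cancel (Q.e (Q.t x)) x hs
  rwa [Q.e_mul] at this

lemma inv_mul (x : T) : Q.mul (Q.inv x) x = Q.e (Q.s x) := by
  have hs : Q.s x = Q.t (Q.e (Q.s x)) := (Q.t_e _).symm
  have := Q.inv_mul_cancel x (Q.e (Q.s x)) hs
  rwa [Q.mul_e] at this

lemma s_inv_s10 (x : T) : Q.s (Q.inv x) = Q.t x := by
  have hs : Q.s x = Q.t (Q.e (Q.s x)) := (Q.t_e _).symm
  have := Q.inv_comp_left x (Q.e (Q.s x)) hs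
  rwa [Q.mul_e] at this

lemma t_inv_s10 (x : T) : Q.t (Q.inv x) = Q.s x := by
  have hs : Q.s (Q.e (Q.t x)) = Q.t x := Q.s_e _
  have := Q.comp_inv_right (Q.e (Q.t x)) x hs
  rw [Q.e_mul] at this
  exact this.symm

end Quasigroupoid

lemma IsMatchedPair.actH_e {O A1 H1 : Type*} {A : Quasigroupoid O A1} {H : Quasigroupoid O H1}
    {φA : H1 → A1 → A1} {φH : H1 → A1 → H1} (hmp : IsMatchedPair A H φA φH) (a : A1) :
    φH (H.e (A.t a)) a = H.e (A.s a) := by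
  set g := H.e (A.t a) with hg
  have hsg : H.s g = A.t a := H.s_e _
  set u := φH g a with hu
  have hsu : H.s u = A.s a := hmp.s_act g a hsg
  have htu : H.t u = A.s a := by
    have := hmp.compat_st g a hsg
    rw [hmp.act_id a] at this
    exact this.symm
  -- u = mul u u
  have key : H.mul u u = u := by
    have h1 : H.s g = H.t (H.e (H.s g)) := (H.t_e _).symm
    have h2 : H.s (H.e (H.s g)) = A.t a := by rw [H.s_e, hsg]
    have := hmp.compat_mulH g (H.e (H.s g)) a h1 h2
    rw [H.mul_e] at this
    have he : H.e (H.s g) = g := by rw [hsg, hg]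
    rw [he, hmp.act_id a] at this
    exact this.symm
  have hcomp : H.s u = H.t u := by rw [hsu, htu]
  have c1 := H.inv_mul_cancel u u hcomp
  rw [key] at c1
  have c2 : H.s u = H.t (H.e (H.s u)) := (H.t_e _).symm
  have c3 := H.inv_mul_cancel u (H.e (H.s u)) c2
  rw [H.mul_e] at c3
  rw [c1] at c3
  rw [c3, hsu]

/-- For a matched pair of quasigroupoids: `λ_H(φH(h,a)) = φH(λ_H h, φA(h,a))`. -/
theorem matchedPair_inv_actH {O A1 H1 : Type*}
    (A : Quasigroupoid O A1) (H : Quasigroupoid O H1)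
    (φA : H1 → A1 → A1) (φH : H1 → A1 → H1)
    (hmp : IsMatchedPair A H φA φH) (h : H1) (a : A1) (hc : H.s h = A.t a) :
    H.inv (φH h a) = φH (H.inv h) (φA h a) := by
  have hsinv : H.s (H.inv h) = H.t h := H.s_inv_s10 h
  have htinv : H.t (H.inv h) = H.s h := H.t_inv_s10 h
  have htφA : A.t (φA h a) = H.t h := hmp.t_act h a hc
  have hc2 : H.s (H.inv h) = A.t (φA h a) := by rw [hsinv, htφA]
  -- φA (inv h) (φA h a) = a
  have hAinv : φA (H.inv h) (φA h a) = a := by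
    have := hmp.act_mul (H.inv h) h a (by rw [hsinv]) hc
    rw [H.inv_mul, hc, hmp.act_id] at this
    exact this.symm
  set k := φH h a with hk
  set z := φH (H.inv h) (φA h a) with hz
  have hsk : H.s k = A.s a := hmp.s_act h a hc
  have htz : H.t z = A.s a := by
    have := hmp.compat_st (H.inv h) (φA h a) hc2
    rw [hAinv] at this
    exact this.symm
  -- mul k z = e (t k)
  have htk : H.t k = A.s (φA h a) := (hmp.compat_st h a hc).symm
  have key : H.mul k z = H.e (H.t k) := by
    have := hmp.compat_mulH h (H.inv h) (φA h a) (by rw [htinv]) hc2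
    rw [H.mul_inv, hAinv] at this
    have he := hmp.actH_e (φA h a)
    rw [htφA] at he
    rw [he] at this
    rw [htk]
    exact this.symm
  have hmkinv : H.mul k (H.inv k) = H.e (H.t k) := H.mul_inv k
  have hskz : H.s k = H.t z := by rw [hsk, htz]
  have hski : H.s k = H.t (H.inv k) := by rw [hsk, H.t_inv_s10, hsk]
  have c1 := H.inv_mul_cancel k z hskz
  have c2 := H.inv_mul_cancel k (H.inv k) hski
  rw [key] at c1
  rw [hmkinv] at c2
  exact c2.symm.trans c1
end

section
/- Let (A, H) be a matched pair of quasigroupoids. The maps i^A : A → A⋈H with i^A₀ = id on A₀ and i^A₁(a) = (a, id_H(s_A(a))), and i^H : H → A⋈H with i^H₀ = id and i^H₁(g) = (id_A(t_H(g)), g), are quasigroupoid monomorphisms; hence A and H are subquasigroupoids of A⋈H. -/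
variable {O A1 H1 : Type*}

/-- The canonical inclusion of `A` into the arrows of `A ⋈ H` (first component). -/
def incA (A : Quasigroupoid O A1) (H : Quasigroupoid O H1) (a : A1) : A1 × H1 :=
  (a, H.e (A.s a))

/-- The canonical inclusion of `H` into the arrows of `A ⋈ H` (second component). -/
def incH (A : Quasigroupoid O A1) (H : Quasigroupoid O H1) (g : H1) : A1 × H1 :=
  (A.e (H.t g), g)

/-- The double cross product `(a,g)·(b,h) = (a • φA(g,b), φH(g,b) ⋆ h)` of `A ⋈ H`
(the formula defining the product of `A ⋈ H` on composable pairs). -/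
def dcpMul (A : Quasigroupoid O A1) (H : Quasigroupoid O H1)
    (φA : H1 → A1 → A1) (φH : H1 → A1 → H1) (p q : A1 × H1) : A1 × H1 :=
  (A.mul p.1 (φA p.2 q.1), H.mul (φH p.2 q.1) q.2)

/-- In a quasigroupoid, a loop equal to its own square is an identity. -/
lemma Quasigroupoid.idem_eq_e {O A1 : Type*} (Q : Quasigroupoid O A1) (x : A1)
    (hst : Q.s x = Q.t x) (hmul : Q.mul x x = x) : x = Q.e (Q.s x) := by
  have h1 := Q.inv_mul_cancel x x hst
  rw [hmul] at h1
  have h2 := Q.inv_mul_cancel x (Q.e (Q.s x)) (by rw [Q.t_e])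
  rw [Q.mul_e] at h2
  exact h1.symm.trans h2

/-- For a matched pair of quasigroupoids, the canonical inclusions
`i^A(a) = (a, id_H(s_A a))` and `i^H(g) = (id_A(t_H g), g)` are quasigroupoid
monomorphisms into `A ⋈ H` (identity on objects): they are injective, land in the
arrows of `A ⋈ H`, commute with source, target and identities, and preserve the
product of composable arrows. Hence `A` and `H` are subquasigroupoids of `A ⋈ H`. -/
theorem inclusions_are_monomorphisms
    (A : Quasigroupoid O A1) (H : Quasigroupoid O H1)
    (φA : H1 → A1 → A1) (φH : H1 → A1 → H1)
    (hmp : IsMatchedPair A H φA φH) :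
    Function.Injective (incA A H) ∧
    Function.Injective (incH A H) ∧
    (∀ a, A.s (incA A H a).1 = H.t (incA A H a).2) ∧
    (∀ g, A.s (incH A H g).1 = H.t (incH A H g).2) ∧
    (∀ a, H.s (incA A H a).2 = A.s a) ∧
    (∀ a, A.t (incA A H a).1 = A.t a) ∧
    (∀ x, incA A H (A.e x) = (A.e x, H.e x)) ∧
    (∀ a b, A.s a = A.t b →
      incA A H (A.mul a b) = dcpMul A H φA φH (incA A H a) (incA A H b)) ∧
    (∀ g, H.s (incH A H g).2 = H.s g) ∧
    (∀ g, A.t (incH A H g).1 = H.t g) ∧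
    (∀ x, incH A H (H.e x) = (A.e x, H.e x)) ∧
    (∀ g h, H.s g = H.t h →
      incH A H (H.mul g h) = dcpMul A H φA φH (incH A H g) (incH A H h)) := by
  refine ⟨?_, ?_, ?_, ?_, ?_, ?_, ?_, ?_, ?_, ?_, ?_, ?_⟩
  · intro a b h; exact congrArg Prod.fst h
  · intro a b h; exact congrArg Prod.snd h
  · intro a; simp [incA, H.t_e]
  · intro g; simp [incH, A.s_e]
  · intro a; simp [incA, H.s_e]
  · intro a; simp [incA]
  · intro x; simp [incA, A.s_e]
  · intro a b hab
    have hcomp : H.s (H.e (A.t b)) = A.t b := H.s_e _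
    have hact : φA (H.e (A.t b)) b = b := hmp.act_id b
    set x := φH (H.e (A.t b)) b with hx
    have hsx : H.s x = A.s b := hmp.s_act _ _ hcomp
    have htx : H.t x = A.s b := by
      have h := hmp.compat_st (H.e (A.t b)) b hcomp
      rw [hact] at h; exact h.symm
    have hmm : H.mul x x = x := by
      have h1 : H.mul (H.e (A.t b)) (H.e (A.t b)) = H.e (A.t b) := by
        have h := H.mul_e (H.e (A.t b)); rwa [H.s_e] at h
      have h2 := hmp.compat_mulH (H.e (A.t b)) (H.e (A.t b)) b
        (by rw [H.s_e, H.t_e]) hcomp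
      rw [h1, hact, ← hx] at h2
      exact h2.symm
    have hxe : x = H.e (A.s b) := by
      have h := H.idem_eq_e x (by rw [hsx, htx]) hmm
      rwa [hsx] at h
    have hmulx : H.mul x (H.e (A.s b)) = x := by
      have h := H.mul_e x; rwa [hsx] at h
    simp only [incA, dcpMul, hab, hact, ← hx, Prod.mk.injEq]
    refine ⟨trivial, ?_⟩
    rw [A.s_mul a b hab, hmulx, hxe]
  · intro g; simp [incH]
  · intro g; simp [incH, A.t_e]
  · intro x; simp [incH, H.t_e]
  · intro g h hgh
    have hcomp : H.s g = A.t (A.e (H.s g)) := (A.t_e _).symm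
    have hactH : φH g (A.e (H.s g)) = g := hmp.actH_id g
    set y := φA g (A.e (H.s g)) with hy
    have hty : A.t y = H.t g := hmp.t_act _ _ hcomp
    have hsy : A.s y = H.t g := by
      have hc := hmp.compat_st g (A.e (H.s g)) hcomp
      rw [hactH] at hc; exact hc
    have hmm : A.mul y y = y := by
      have h1 : A.mul (A.e (H.s g)) (A.e (H.s g)) = A.e (H.s g) := by
        have hh := A.mul_e (A.e (H.s g)); rwa [A.s_e] at hh
      have h2 := hmp.compat_mulA g (A.e (H.s g)) (A.e (H.s g)) hcomp
        (by rw [A.s_e, A.t_e])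
      rw [h1, hactH, ← hy] at h2
      exact h2.symm
    have hye : y = A.e (H.t g) := by
      have hh := A.idem_eq_e y (by rw [hsy, hty]) hmm
      rwa [hsy] at hh
    have hmuly : A.mul (A.e (H.t g)) y = y := by
      have hh := A.e_mul y; rwa [hty] at hh
    simp only [incH, dcpMul, Prod.mk.injEq]
    have hgh' : A.e (H.t h) = A.e (H.s g) := by rw [hgh]
    rw [hgh', hactH, H.t_mul g h hgh, ← hy, hmuly, hye]
    exact ⟨rfl, rfl⟩
end
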